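/- Let λ = (k_1,…,k_n) ∈ ℤ^n be dominant, and fix a partition of {1,…,n} into consecutive blocks. Let w ∈ S_n with w ≠ 1 such that w·λ (dot action, (w·λ)_i = k_{w^{-1}(i)} − (w^{-1}(i) − i)) is P-dominant for this block partition. Let i_0 be the smallest index with w^{-1}(i_0) ≠ i_0 (so i_0 < w^{-1}(i_0)). Then for every index i ≥ i_0 lying in the same block as i_0, one has w^{-1}(i) ≥ w^{-1}(i_0) + (i − i_0). -/

import Mathlib

/-- Coordinates of the dot action: `(w·λ)_i = k_{w⁻¹(i)} − (w⁻¹(i) − i)`. -/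
def dotAct {n : ℕ} (w : Equiv.Perm (Fin n)) (k : Fin n → ℤ) : Fin n → ℤ :=
  fun i => k (w⁻¹ i) - (((w⁻¹ i : Fin n) : ℕ) : ℤ) + ((i : ℕ) : ℤ)

lemma dot_step (n : ℕ) (k : Fin n → ℤ)
    (hdom : ∀ i j : Fin n, i ≤ j → k j ≤ k i)
    (w : Equiv.Perm (Fin n)) (j : ℕ) (hj : j + 1 < n)
    (h : dotAct w k ⟨j + 1, hj⟩ ≤ dotAct w k ⟨j, Nat.lt_of_succ_lt hj⟩) :
    ((w⁻¹ ⟨j, Nat.lt_of_succ_lt hj⟩ : Fin n) : ℕ) < ((w⁻¹ ⟨j + 1, hj⟩ : Fin n) : ℕ) := by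
  set a := w⁻¹ ⟨j, Nat.lt_of_succ_lt hj⟩ with ha
  set b := w⁻¹ ⟨j + 1, hj⟩ with hb
  by_contra hc
  push_neg at hc
  have hne : b ≠ a := by
    intro he
    have := w⁻¹.injective (ha ▸ hb ▸ he)
    simp [Fin.ext_iff] at this
  have hba : b < a := lt_of_le_of_ne (by exact_mod_cast hc) hne
  have hk : k a ≤ k b := hdom b a hba.le
  simp only [dotAct, ← ha, ← hb] at h
  have hba' : (b : ℕ) < (a : ℕ) := hba
  push_cast at h
  omega

theorem dot_dominant_displacement (n : ℕ) (k : Fin n → ℤ)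
    (hdom : ∀ i j : Fin n, i ≤ j → k j ≤ k i)
    (I : Set ℕ) (w : Equiv.Perm (Fin n)) (hw : w ≠ 1)
    (hPdom : ∀ j : ℕ, ∀ hj : j + 1 < n, j ∈ I →
      dotAct w k ⟨j + 1, hj⟩ ≤ dotAct w k ⟨j, Nat.lt_of_succ_lt hj⟩)
    (i0 : Fin n) (hi0 : w⁻¹ i0 ≠ i0) (hmin : ∀ i : Fin n, i < i0 → w⁻¹ i = i) :
    ∀ i : Fin n, i0 ≤ i → (∀ t : ℕ, (i0 : ℕ) ≤ t → t < (i : ℕ) → t ∈ I) →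
      ((w⁻¹ i0 : Fin n) : ℕ) + ((i : ℕ) - (i0 : ℕ)) ≤ ((w⁻¹ i : Fin n) : ℕ) := by
  suffices H : ∀ m : ℕ, ∀ i : Fin n, (i : ℕ) = (i0 : ℕ) + m →
      (∀ t : ℕ, (i0 : ℕ) ≤ t → t < (i : ℕ) → t ∈ I) →
      ((w⁻¹ i0 : Fin n) : ℕ) + m ≤ ((w⁻¹ i : Fin n) : ℕ) by
    intro i hle hI
    have hle' : (i0 : ℕ) ≤ (i : ℕ) := hle
    have := H ((i : ℕ) - (i0 : ℕ)) i (by omega) hI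
    omega
  intro m
  induction m with
  | zero =>
    intro i hi _
    have : i = i0 := Fin.ext (by omega)
    simp [this]
  | succ m ih =>
    intro i hi hI
    have hjn : (i0 : ℕ) + m + 1 < n := hi ▸ i.isLt
    set prev : Fin n := ⟨(i0 : ℕ) + m, Nat.lt_of_succ_lt hjn⟩ with hprev
    have hIm : ((i0 : ℕ) + m) ∈ I := hI _ (by omega) (by omega)
    have hstep := dot_step n k hdom w ((i0 : ℕ) + m) hjn (hPdom _ hjn hIm)
    have hieq : i = ⟨(i0 : ℕ) + m + 1, hjn⟩ := Fin.ext (by show (i : ℕ) = (i0 : ℕ) + m + 1; omega)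
    have hprevle := ih prev rfl (fun t ht1 ht2 => hI t ht1 (by simp [hprev] at ht2; omega))
    have hstep' : ((w⁻¹ prev : Fin n) : ℕ) < ((w⁻¹ ⟨(i0 : ℕ) + m + 1, hjn⟩ : Fin n) : ℕ) :=
      hstep
    rw [hieq]
    omega
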